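/- Let R be an associative ring, 𝒜 a ring of central cohomology operations on D(R), and M a complex of R-modules. Then the full subcategory of D(R) consisting of those complexes L for which the graded 𝒜-module Ext*_R(M,L) is eventually noetherian is a thick subcategory of D(R); the same holds for the complexes L such that Ext*_R(L,M) is eventually noetherian. -/

import Mathlib

/-! Core framework: complexes of modules, semiprojective complexes, hard truncations,
syzygy complexes, the derived category, Ext groups, central cohomology operations,
graded supports and thick subcategories.

Conventions: we use cochain complexes indexed by `ℤ`; the homological degree `i`
of the paper corresponds to the cochain degree `-i`, so that the homological
shift `Σ^d` is the categorical shift `⟦d⟧` and the homological hard truncation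
`P_{⩾ n}` is the cochain hard truncation in degrees `⩽ -n`. -/

open CategoryTheory Limits Pretriangulated

universe w v u

namespace CohSupp

variable (R : Type u) [Ring R]

/-- Complexes of left `R`-modules (cochain convention). -/
abbrev Cx := CochainComplex (ModuleCat.{u} R) ℤ

variable {R}

/-- A complex `P` is semiprojective if each component is a projective module and
`Hom_R(P, -)` preserves quasi-isomorphisms, i.e. composition with any
quasi-isomorphism induces a bijection on homotopy classes of morphisms from `P`. -/
def Semiprojective (P : Cx R) : Prop :=
  (∀ i : ℤ, Projective (P.X i)) ∧
    ∀ (N N' : Cx R) (g : N ⟶ N'), QuasiIso g →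
      Function.Bijective
        (fun f : (HomotopyCategory.quotient (ModuleCat.{u} R) (ComplexShape.up ℤ)).obj P ⟶
            (HomotopyCategory.quotient (ModuleCat.{u} R) (ComplexShape.up ℤ)).obj N =>
          f ≫ (HomotopyCategory.quotient (ModuleCat.{u} R) (ComplexShape.up ℤ)).map g)

/-- Hard (stupid) truncation of a cochain complex, keeping the components in
cochain degrees `⩽ m`. -/
noncomputable def hardTruncLE (P : Cx R) (m : ℤ) : Cx R where
  X i := if i ≤ m then P.X i else ModuleCat.of R PUnit
  d i j :=
    if hi : i ≤ m then
      if hj : j ≤ m then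
        eqToHom (if_pos hi) ≫ P.d i j ≫ eqToHom (if_pos hj).symm
      else 0
    else 0
  shape i j h := by
    try dsimp only
    by_cases hi : i ≤ m <;> by_cases hj : j ≤ m <;> simp [hi, hj, P.shape i j h]
  d_comp_d' i j k _ _ := by
    try dsimp only
    by_cases hi : i ≤ m <;> by_cases hj : j ≤ m <;> by_cases hk : k ≤ m <;>
      simp [hi, hj, hk]

/-- The hard truncation `P_{⩾ n}` in *homological* degrees `⩾ n`, i.e. in cochain
degrees `⩽ -n`. -/
noncomputable def truncGE (P : Cx R) (n : ℤ) : Cx R := hardTruncLE P (-n)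

/-- The `n`-th syzygy complex `Ω^n = Σ^{-n}(P_{⩾ n})` associated to a
(semiprojective) complex `P`. -/
noncomputable def syzygy (P : Cx R) (n : ℤ) : Cx R := (truncGE P n)⟦(-n : ℤ)⟧

/-- The complex consisting of a single module placed in homological degree `n`
(cochain degree `-n`); this is `Σ^n` applied to the module. -/
noncomputable def singleMod (n : ℤ) (W : ModuleCat.{u} R) : Cx R :=
  (HomologicalComplex.single (ModuleCat.{u} R) (ComplexShape.up ℤ) (-n)).obj W

/-- A module viewed as a complex concentrated in degree `0`. -/
noncomputable def ofMod (W : Type u) [AddCommGroup W] [Module R W] : Cx R :=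
  singleMod 0 (ModuleCat.of R W)

variable (R) in
/-- The ring `R`, viewed as a complex concentrated in degree `0`. -/
noncomputable def selfCx : Cx R := ofMod R

/-- The homology of a complex in *homological* degree `i` (cochain degree `-i`). -/
noncomputable def hgy (M : Cx R) (i : ℤ) : ModuleCat.{u} R := M.homology (-i)

/-- The total homology of `M` is a finitely generated `R`-module: each homology
module is finitely generated and all but finitely many vanish. -/
def FGTotalHomology (M : Cx R) : Prop :=
  (∀ i : ℤ, Module.Finite R (M.homology i)) ∧
    ∃ b : ℕ, ∀ i : ℤ, (b : ℤ) ≤ |i| → IsZero (M.homology i)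

/-- `M` has bounded homology. -/
def BoundedHomology (M : Cx R) : Prop :=
  ∃ b : ℕ, ∀ i : ℤ, (b : ℤ) ≤ |i| → IsZero (M.homology i)

section Derived

variable [HasDerivedCategory.{w} (ModuleCat.{u} R)]

variable (R) in
/-- The derived category of `R`. -/
abbrev D := DerivedCategory (ModuleCat.{u} R)

/-- The localization functor. -/
noncomputable abbrev dQ : Cx R ⥤ D R := DerivedCategory.Q

/-- `Ext^i` of two objects of the derived category:
morphisms `X ⟶ Y⟦i⟧`. -/
abbrev ExtO (X Y : D R) (i : ℤ) : Type w := X ⟶ Y⟦i⟧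

/-- Transport along an equality of degrees. -/
def extCast {X Y : D R} {i j : ℤ} (h : i = j) (x : ExtO X Y i) : ExtO X Y j := h ▸ x

/-- The (Yoneda) composition product on graded Ext: for `α` of degree `i`
and `β` of degree `j`, `excomp h β α` is the composite `β ∘ α` of degree `k = i + j`. -/
noncomputable def excomp {X Y Z : D R} {i j k : ℤ} (h : i + j = k)
    (β : ExtO Y Z j) (α : ExtO X Y i) : ExtO X Z k :=
  α ≫ β⟦i⟧' ≫ (shiftFunctorAdd' (D R) j i k (by omega)).inv.app Z

variable (R) in
/-- A ring of central cohomology operations on `D(R)`: a non-negatively graded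
commutative ring `A` (with grading `ℬ`, concentrated in even degrees unless `2 = 0`
in `A`), together with graded ring homomorphisms `ζ_X : A → Ext*(X,X)` for every
object `X` of `D(R)`, satisfying the centrality condition
`ξ · ζ_X(a) = ζ_Y(a) · ξ`. -/
structure CentralOps (A : Type v) [CommRing A] (ℬ : ℤ → AddSubgroup A) [GradedRing ℬ] where
  nonneg : ∀ i : ℤ, i < 0 → ℬ i = ⊥
  parity : (∀ i : ℤ, Odd i → ℬ i = ⊥) ∨ (∀ a : A, a + a = 0)
  zeta : ∀ (X : D R) (i : ℤ), ℬ i → ExtO X X i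
  zeta_add : ∀ (X : D R) (i : ℤ) (a b : ℬ i), zeta X i (a + b) = zeta X i a + zeta X i b
  zeta_one : ∀ X : D R, zeta X 0 ⟨1, SetLike.one_mem_graded ℬ⟩ = (shiftFunctorZero (D R) ℤ).inv.app X
  zeta_mul : ∀ (X : D R) (i j : ℤ) (a : ℬ i) (b : ℬ j),
    zeta X (i + j) ⟨(a : A) * (b : A), SetLike.mul_mem_graded a.2 b.2⟩ =
      excomp rfl (zeta X j b) (zeta X i a)
  central : ∀ (X Y : D R) (d i : ℤ) (ξ : ExtO X Y d) (a : ℬ i),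
    excomp rfl ξ (zeta X i a) = excomp (by omega) (zeta Y i a) ξ

variable {A : Type v} [CommRing A] {ℬ : ℤ → AddSubgroup A} [GradedRing ℬ]

/-- The action of a homogeneous element `a ∈ A^i` on `Ext^j(X,Y)`, making the
graded Ext a graded `A`-module. -/
noncomputable def act (Z : CentralOps R A ℬ) {X Y : D R} {i j : ℤ}
    (a : ℬ i) (x : ExtO X Y j) : ExtO X Y (i + j) :=
  excomp (by omega) (Z.zeta Y i a) x

/-- A graded `A`-submodule of `Ext*(X,Y)`. -/
structure ExtSub (Z : CentralOps R A ℬ) (X Y : D R) where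
  carrier : ∀ j : ℤ, AddSubgroup (ExtO X Y j)
  act_mem : ∀ {i j : ℤ} (a : ℬ i) {x : ExtO X Y j}, x ∈ carrier j → act Z a x ∈ carrier (i + j)

/-- The graded `A`-module `Ext*(X,Y)` is noetherian: every ascending chain of
graded submodules stabilizes. -/
def NoethAll (Z : CentralOps R A ℬ) (X Y : D R) : Prop :=
  ∀ f : ℕ → ExtSub Z X Y,
    (∀ (n : ℕ) (j : ℤ), (f n).carrier j ≤ (f (n + 1)).carrier j) →
    ∃ n : ℕ, ∀ m : ℕ, n ≤ m → ∀ j : ℤ, (f m).carrier j = (f n).carrier j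

/-- The graded `A`-module `Ext^{⩾ j₀}(X,Y)` is noetherian. -/
def NoethFrom (Z : CentralOps R A ℬ) (X Y : D R) (j₀ : ℤ) : Prop :=
  ∀ f : ℕ → ExtSub Z X Y,
    (∀ (n : ℕ) (j : ℤ), j < j₀ → (f n).carrier j = ⊥) →
    (∀ (n : ℕ) (j : ℤ), (f n).carrier j ≤ (f (n + 1)).carrier j) →
    ∃ n : ℕ, ∀ m : ℕ, n ≤ m → ∀ j : ℤ, (f m).carrier j = (f n).carrier j

/-- The graded `A`-module `Ext*(X,Y)` is eventually noetherian:
`Ext^{⩾ j}(X,Y)` is a noetherian `A`-module for all `j ≫ 0`. -/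
def EvNoeth (Z : CentralOps R A ℬ) (X Y : D R) : Prop :=
  ∃ j₀ : ℤ, ∀ j : ℤ, j₀ ≤ j → NoethFrom Z X Y j

/-- The graded `A`-module `Ext*(X,Y)` is eventually zero. -/
def EvZero (X Y : D R) : Prop :=
  ∃ j₀ : ℤ, ∀ j : ℤ, j₀ ≤ j → Subsingleton (ExtO X Y j)

end Derived

variable {A : Type v} [CommRing A] (ℬ : ℤ → AddSubgroup A) [GradedRing ℬ]

/-- `Proj A`: the homogeneous prime ideals of `A` not containing `A^{⩾ 1}`. -/
def ProjSet : Set (Ideal A) :=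
  {p | p.IsPrime ∧ Ideal.IsHomogeneous ℬ p ∧ ¬ ∀ i : ℤ, 1 ≤ i → (ℬ i : Set A) ⊆ p}

/-- Zariski closed subsets of `Proj A`: zero sets of homogeneous ideals. -/
def ProjClosed (C : Set (Ideal A)) : Prop :=
  ∃ J : Ideal A, Ideal.IsHomogeneous ℬ J ∧ C = {p | p ∈ ProjSet ℬ ∧ J ≤ p}

/-- `X` is a closed subset of the subspace `S` of `Proj A`. -/
def ClosedIn (X S : Set (Ideal A)) : Prop :=
  X ⊆ S ∧ ∃ C : Set (Ideal A), ProjClosed ℬ C ∧ X = S ∩ C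

/-- `X` is an irreducible subset of `Proj A`. -/
def IrreducibleIn (X : Set (Ideal A)) : Prop :=
  X.Nonempty ∧ ∀ C₁ C₂ : Set (Ideal A), ProjClosed ℬ C₁ → ProjClosed ℬ C₂ →
    X ⊆ C₁ ∪ C₂ → X ⊆ C₁ ∨ X ⊆ C₂

section Derived2

variable [HasDerivedCategory.{w} (ModuleCat.{u} R)]
variable {ℬ}

/-- The cohomological support `Supp*_A(X,Y) ⊆ Proj A`: the primes `p` such that the
localization of the graded `A`-module `Ext*(X,Y)` at `p` is nonzero, i.e. such that
some homogeneous element of `Ext*(X,Y)` is not annihilated by any homogeneous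
element outside of `p`. -/
noncomputable def supp (Z : CentralOps R A ℬ) (X Y : D R) : Set (Ideal A) :=
  {p | p ∈ ProjSet ℬ ∧ ∃ (j : ℤ) (x : ExtO X Y j), x ≠ 0 ∧
    ∀ (i : ℤ) (s : ℬ i), (s : A) ∉ p → act Z s x ≠ 0}

/-- A thick subcategory of `D(R)` (as a set of objects): closed under isomorphisms,
shifts, mapping cones (two-out-of-three in distinguished triangles) and retracts
(direct summands), and containing the zero objects. -/
def IsThickSet (S : Set (D R)) : Prop :=
  (∀ X : D R, IsZero X → X ∈ S) ∧
  (∀ X Y : D R, (X ≅ Y) → X ∈ S → Y ∈ S) ∧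
  (∀ X : D R, X ∈ S → X⟦(1 : ℤ)⟧ ∈ S ∧ X⟦(-1 : ℤ)⟧ ∈ S) ∧
  (∀ T : Triangle (D R), T ∈ (distTriang (D R)) → T.obj₁ ∈ S → T.obj₂ ∈ S → T.obj₃ ∈ S) ∧
  (∀ (X Y : D R) (ι : X ⟶ Y) (ρ : Y ⟶ X), ι ≫ ρ = 𝟙 X → Y ∈ S → X ∈ S)

/-- `X` belongs to the thick closure of `G` in `D(R)`. -/
def InThick (G X : D R) : Prop := ∀ S : Set (D R), IsThickSet S → G ∈ S → X ∈ S

end Derived2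

end CohSupp


namespace CohSupp

section Auxiliary

variable {R : Type u} [Ring R] [HasDerivedCategory.{w} (ModuleCat.{u} R)]
variable {A : Type v} [CommRing A] {ℬ : ℤ → AddSubgroup A} [GradedRing ℬ]
variable (Z : CentralOps R A ℬ)

/-! Basic lemmas relating `excomp`/`act` to `ShiftedHom.comp`. -/

lemma act_eq {X Y : D R} {i j : ℤ} (a : ℬ i) (x : ExtO X Y j) :
    act Z a x = ShiftedHom.comp x (Z.zeta Y i a) rfl := rfl

lemma zeta_zero (X : D R) (i : ℤ) : Z.zeta X i 0 = 0 := by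
  have h : Z.zeta X i 0 = Z.zeta X i 0 + Z.zeta X i 0 := by
    simpa using Z.zeta_add X i 0 0
  exact left_eq_add.mp h

/-! Additivity of composition, restated for `ExtO`. -/

lemma ecomp_add {X Y Y' : D R} {j d c : ℤ} (x₁ x₂ : ExtO X Y j) (ξ : ExtO Y Y' d)
    (h : d + j = c) :
    ShiftedHom.comp (x₁ + x₂) ξ h = ShiftedHom.comp x₁ ξ h + ShiftedHom.comp x₂ ξ h :=
  ShiftedHom.add_comp x₁ x₂ ξ h

lemma ecomp_neg {X Y Y' : D R} {j d c : ℤ} (x : ExtO X Y j) (ξ : ExtO Y Y' d)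
    (h : d + j = c) :
    ShiftedHom.comp (-x) ξ h = -ShiftedHom.comp x ξ h :=
  ShiftedHom.neg_comp x ξ h

lemma ecomp_zero {X Y Y' : D R} {j d c : ℤ} (ξ : ExtO Y Y' d) (h : d + j = c) :
    ShiftedHom.comp (0 : ExtO X Y j) ξ h = 0 :=
  ShiftedHom.zero_comp X j ξ h

lemma ecomp_sub {X Y Y' : D R} {j d c : ℤ} (x₁ x₂ : ExtO X Y j) (ξ : ExtO Y Y' d)
    (h : d + j = c) :
    ShiftedHom.comp (x₁ - x₂) ξ h = ShiftedHom.comp x₁ ξ h - ShiftedHom.comp x₂ ξ h := by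
  rw [sub_eq_add_neg, ecomp_add, ecomp_neg, ← sub_eq_add_neg]

lemma epre_add {X' X Y : D R} {j d c : ℤ} (ξ : ExtO X' X d) (x₁ x₂ : ExtO X Y j)
    (h : j + d = c) :
    ShiftedHom.comp ξ (x₁ + x₂) h = ShiftedHom.comp ξ x₁ h + ShiftedHom.comp ξ x₂ h :=
  ShiftedHom.comp_add ξ x₁ x₂ h

lemma epre_neg {X' X Y : D R} {j d c : ℤ} (ξ : ExtO X' X d) (x : ExtO X Y j)
    (h : j + d = c) :
    ShiftedHom.comp ξ (-x) h = -ShiftedHom.comp ξ x h :=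
  ShiftedHom.comp_neg ξ x h

lemma epre_zero {X' X Y : D R} {j d c : ℤ} (ξ : ExtO X' X d) (h : j + d = c) :
    ShiftedHom.comp ξ (0 : ExtO X Y j) h = 0 :=
  ShiftedHom.comp_zero Y ξ h

lemma epre_sub {X' X Y : D R} {j d c : ℤ} (ξ : ExtO X' X d) (x₁ x₂ : ExtO X Y j)
    (h : j + d = c) :
    ShiftedHom.comp ξ (x₁ - x₂) h = ShiftedHom.comp ξ x₁ h - ShiftedHom.comp ξ x₂ h := by
  rw [sub_eq_add_neg, epre_add, epre_neg, ← sub_eq_add_neg]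

lemma act_zero_right {X Y : D R} {i j : ℤ} (a : ℬ i) :
    act Z a (0 : ExtO X Y j) = 0 := by
  rw [act_eq]
  exact ecomp_zero _ _

lemma act_eq_zero_of_neg {X Y : D R} {i j : ℤ} (hi : i < 0) (a : ℬ i) (x : ExtO X Y j) :
    act Z a x = 0 := by
  have ha : a = 0 := by
    apply Subtype.ext
    have h2 : (a : A) ∈ (⊥ : AddSubgroup A) := by
      rw [← Z.nonneg i hi]; exact a.2
    simpa using h2
  rw [ha, act_eq, zeta_zero]
  exact ShiftedHom.comp_zero _ _ _

/-! Centrality, restated. -/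

lemma central' {X Y : D R} {d i : ℤ} (ξ : ExtO X Y d) (a : ℬ i) :
    ShiftedHom.comp (Z.zeta X i a) ξ (by omega : d + i = i + d) =
      ShiftedHom.comp ξ (Z.zeta Y i a) rfl :=
  Z.central X Y d i ξ a

/-! The action commutes with post- and pre-composition. -/

lemma act_comp {X Y Y' : D R} {i j d c : ℤ} (a : ℬ i) (x : ExtO X Y j) (ξ : ExtO Y Y' d)
    (h : d + j = c) :
    act Z a (ShiftedHom.comp x ξ h) = ShiftedHom.comp (act Z a x) ξ (by omega) := by
  subst h
  rw [act_eq, act_eq,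
    ShiftedHom.comp_assoc x ξ (Z.zeta Y' i a) rfl rfl (by omega : i + d + j = i + (d + j)),
    ← central' Z ξ a,
    ← ShiftedHom.comp_assoc x (Z.zeta Y i a) ξ rfl (by omega : d + i = i + d)
      (by omega : d + i + j = i + (d + j))]

lemma act_precomp {X' X Y : D R} {i j d c : ℤ} (a : ℬ i) (ξ : ExtO X' X d) (x : ExtO X Y j)
    (h : j + d = c) :
    act Z a (ShiftedHom.comp ξ x h) = ShiftedHom.comp ξ (act Z a x) (by omega) := by
  subst h
  rw [act_eq, act_eq,
    ShiftedHom.comp_assoc ξ x (Z.zeta Y i a) rfl rfl (by omega : i + j + d = i + (j + d))]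

/-! Cast lemmas. -/

lemma extCast_mem {X Y : D R} (F : ExtSub Z X Y) {j j' : ℤ} (h : j = j') {x : ExtO X Y j}
    (hx : x ∈ F.carrier j) : extCast h x ∈ F.carrier j' := by subst h; exact hx

lemma comp_cast {X Y Y' : D R} {j j' d c : ℤ} (h : j = j') (x : ExtO X Y j) (ξ : ExtO Y Y' d)
    (h₁ : d + j' = c) :
    ShiftedHom.comp (extCast h x) ξ h₁ = ShiftedHom.comp x ξ (by omega) := by subst h; rfl

lemma precomp_cast {X' X Y : D R} {j j' d c : ℤ} (h : j = j') (ξ : ExtO X' X d)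
    (x : ExtO X Y j) (h₁ : j' + d = c) :
    ShiftedHom.comp ξ (extCast h x) h₁ = ShiftedHom.comp ξ x (by omega) := by subst h; rfl

lemma cast_comp_eq {X Y Y' : D R} {j d c c' : ℤ} (x : ExtO X Y j) (ξ : ExtO Y Y' d)
    (h₁ : d + j = c) (h : c = c') :
    extCast h (ShiftedHom.comp x ξ h₁) = ShiftedHom.comp x ξ (by omega) := by subst h; rfl

lemma cast_precomp_eq {X' X Y : D R} {j d c c' : ℤ} (ξ : ExtO X' X d) (x : ExtO X Y j)
    (h₁ : j + d = c) (h : c = c') :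
    extCast h (ShiftedHom.comp ξ x h₁) = ShiftedHom.comp ξ x (by omega) := by subst h; rfl

/-! Monotone chains of graded submodules. -/

lemma carrier_le {X Y : D R} (f : ℕ → ExtSub Z X Y)
    (hmono : ∀ (n : ℕ) (j : ℤ), (f n).carrier j ≤ (f (n + 1)).carrier j)
    {n m : ℕ} (h : n ≤ m) (j : ℤ) : (f n).carrier j ≤ (f m).carrier j := by
  induction m, h using Nat.le_induction with
  | base => exact le_rfl
  | succ m hm ih => exact ih.trans (hmono m j)

lemma evNoeth_of_subsingleton {X Y : D R} (hs : ∀ j : ℤ, Subsingleton (ExtO X Y j)) :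
    EvNoeth Z X Y := by
  refine ⟨0, fun j _ f _ _ => ⟨0, fun m _ k => ?_⟩⟩
  ext x
  have hx : x = 0 := @Subsingleton.elim _ (hs k) x 0
  constructor <;> intro _ <;> (rw [hx]; exact zero_mem _)

/-! Transfer of eventual noetherianity along (post/pre)composition with
an injectivity-inducing shifted morphism. -/

lemma evNoeth_of_comp_inj {X Y Y' : D R} {d : ℤ} (ξ : ExtO Y Y' d)
    (hinj : ∀ {j c : ℤ} (h : d + j = c) (x : ExtO X Y j),
      ShiftedHom.comp x ξ h = 0 → x = 0)
    (hev : EvNoeth Z X Y') : EvNoeth Z X Y := by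
  obtain ⟨j₀, hj₀⟩ := hev
  refine ⟨j₀ - d, fun j hj f hvan hmono => ?_⟩
  let F : ℕ → ExtSub Z X Y' := fun n =>
    { carrier := fun k =>
        { carrier := {y | ∃ x : ExtO X Y (k - d), x ∈ (f n).carrier (k - d) ∧
            ShiftedHom.comp x ξ (by omega) = y}
          zero_mem' := ⟨0, zero_mem _, ecomp_zero _ _⟩
          add_mem' := by
            rintro y₁ y₂ ⟨x₁, hx₁, rfl⟩ ⟨x₂, hx₂, rfl⟩
            exact ⟨x₁ + x₂, add_mem hx₁ hx₂, ecomp_add _ _ _ _⟩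
          neg_mem' := by
            rintro y ⟨x, hx, rfl⟩
            exact ⟨-x, neg_mem hx, ecomp_neg _ _ _⟩ }
      act_mem := by
        rintro i k a y ⟨x, hx, rfl⟩
        refine ⟨extCast (by omega) (act Z a x), extCast_mem Z _ _ ((f n).act_mem a hx), ?_⟩
        rw [comp_cast, ← act_comp] }
  have Fvan : ∀ (n : ℕ) (k : ℤ), k < j + d → (F n).carrier k = ⊥ := by
    intro n k hk
    rw [eq_bot_iff]
    rintro y ⟨x, hx, rfl⟩
    rw [hvan n (k - d) (by omega), AddSubgroup.mem_bot] at hx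
    rw [hx, AddSubgroup.mem_bot]
    exact ecomp_zero _ _
  have Fmono : ∀ (n : ℕ) (k : ℤ), (F n).carrier k ≤ (F (n + 1)).carrier k := by
    rintro n k y ⟨x, hx, rfl⟩
    exact ⟨x, hmono n (k - d) hx, rfl⟩
  obtain ⟨N, hN⟩ := hj₀ (j + d) (by omega) F Fvan Fmono
  refine ⟨N, fun m hm k => ?_⟩
  refine le_antisymm (fun x hx => ?_) (carrier_le Z f hmono hm k)
  have hmem : ShiftedHom.comp x ξ rfl ∈ (F m).carrier (d + k) :=
    ⟨extCast (by omega) x, extCast_mem Z _ _ hx, comp_cast _ _ _ _⟩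
  rw [hN m hm (d + k)] at hmem
  obtain ⟨x', hx', heq⟩ := hmem
  have hx'' : extCast (by omega : d + k - d = k) x' ∈ (f N).carrier k := extCast_mem Z _ _ hx'
  have hzero : ShiftedHom.comp (extCast (by omega : d + k - d = k) x' - x) ξ rfl = 0 := by
    rw [ecomp_sub, comp_cast, heq, sub_self]
  have hsub := hinj rfl _ hzero
  have hfin : extCast (by omega : d + k - d = k) x' = x := by
    have := sub_eq_zero.mp hsub
    exact this
  rw [← hfin]
  exact hx''

lemma evNoeth_of_precomp_inj {M₀ Y Y' : D R} {d : ℤ} (ξ : ExtO Y' Y d)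
    (hinj : ∀ {j c : ℤ} (h : j + d = c) (x : ExtO Y M₀ j),
      ShiftedHom.comp ξ x h = 0 → x = 0)
    (hev : EvNoeth Z Y' M₀) : EvNoeth Z Y M₀ := by
  obtain ⟨j₀, hj₀⟩ := hev
  refine ⟨j₀ - d, fun j hj f hvan hmono => ?_⟩
  let F : ℕ → ExtSub Z Y' M₀ := fun n =>
    { carrier := fun k =>
        { carrier := {y | ∃ x : ExtO Y M₀ (k - d), x ∈ (f n).carrier (k - d) ∧
            ShiftedHom.comp ξ x (by omega) = y}
          zero_mem' := ⟨0, zero_mem _, epre_zero _ _⟩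
          add_mem' := by
            rintro y₁ y₂ ⟨x₁, hx₁, rfl⟩ ⟨x₂, hx₂, rfl⟩
            exact ⟨x₁ + x₂, add_mem hx₁ hx₂, epre_add _ _ _ _⟩
          neg_mem' := by
            rintro y ⟨x, hx, rfl⟩
            exact ⟨-x, neg_mem hx, epre_neg _ _ _⟩ }
      act_mem := by
        rintro i k a y ⟨x, hx, rfl⟩
        refine ⟨extCast (by omega) (act Z a x), extCast_mem Z _ _ ((f n).act_mem a hx), ?_⟩
        rw [precomp_cast, ← act_precomp] }
  have Fvan : ∀ (n : ℕ) (k : ℤ), k < j + d → (F n).carrier k = ⊥ := by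
    intro n k hk
    rw [eq_bot_iff]
    rintro y ⟨x, hx, rfl⟩
    rw [hvan n (k - d) (by omega), AddSubgroup.mem_bot] at hx
    rw [hx, AddSubgroup.mem_bot]
    exact epre_zero _ _
  have Fmono : ∀ (n : ℕ) (k : ℤ), (F n).carrier k ≤ (F (n + 1)).carrier k := by
    rintro n k y ⟨x, hx, rfl⟩
    exact ⟨x, hmono n (k - d) hx, rfl⟩
  obtain ⟨N, hN⟩ := hj₀ (j + d) (by omega) F Fvan Fmono
  refine ⟨N, fun m hm k => ?_⟩
  refine le_antisymm (fun x hx => ?_) (carrier_le Z f hmono hm k)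
  have hmem : ShiftedHom.comp ξ x rfl ∈ (F m).carrier (k + d) :=
    ⟨extCast (by omega) x, extCast_mem Z _ _ hx, precomp_cast _ _ _ _⟩
  rw [hN m hm (k + d)] at hmem
  obtain ⟨x', hx', heq⟩ := hmem
  have hx'' : extCast (by omega : k + d - d = k) x' ∈ (f N).carrier k := extCast_mem Z _ _ hx'
  have hzero : ShiftedHom.comp ξ (extCast (by omega : k + d - d = k) x' - x) rfl = 0 := by
    rw [epre_sub, precomp_cast, heq, sub_self]
  have hfin : extCast (by omega : k + d - d = k) x' = x := sub_eq_zero.mp (hinj rfl _ hzero)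
  rw [← hfin]
  exact hx''

/-! Truncated preimage graded submodules. -/

/-- Truncated preimage of a graded submodule under postcomposition with a degree-zero
class, vanishing in degrees `< j`. -/
noncomputable def pullSub {X Y Y' : D R} (j : ℤ) (ξ : ExtO Y Y' 0) (F : ExtSub Z X Y') :
    ExtSub Z X Y where
  carrier k :=
    if j ≤ k then
      { carrier := {y | ShiftedHom.comp y ξ (by omega : (0:ℤ) + k = k) ∈ F.carrier k}
        zero_mem' := by
          show ShiftedHom.comp (0 : ExtO X Y k) ξ (by omega : (0:ℤ) + k = k) ∈ F.carrier k
          rw [ecomp_zero]; exact zero_mem _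
        add_mem' := by
          intro y₁ y₂ hy₁ hy₂
          show ShiftedHom.comp (y₁ + y₂) ξ (by omega : (0:ℤ) + k = k) ∈ F.carrier k
          rw [ecomp_add]; exact add_mem hy₁ hy₂
        neg_mem' := by
          intro y hy
          show ShiftedHom.comp (-y) ξ (by omega : (0:ℤ) + k = k) ∈ F.carrier k
          rw [ecomp_neg]; exact neg_mem hy }
    else ⊥
  act_mem := by
    intro i k a y hy
    by_cases hjk : j ≤ k
    · rw [if_pos hjk] at hy
      by_cases hjik : j ≤ i + k
      · rw [if_pos hjik]
        have hy' : ShiftedHom.comp y ξ (by omega : (0:ℤ) + k = k) ∈ F.carrier k := hy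
        have hm := F.act_mem a hy'
        rw [act_comp] at hm
        exact hm
      · rw [if_neg hjik, act_eq_zero_of_neg Z (by omega) a y]
        exact zero_mem _
    · rw [if_neg hjk, AddSubgroup.mem_bot] at hy
      rw [hy, act_zero_right]
      exact zero_mem _

lemma mem_pullSub_iff {X Y Y' : D R} (j : ℤ) (ξ : ExtO Y Y' 0) (F : ExtSub Z X Y')
    {k : ℤ} (h : j ≤ k) (y : ExtO X Y k) :
    y ∈ (pullSub Z j ξ F).carrier k ↔
      ShiftedHom.comp y ξ (by omega : (0:ℤ) + k = k) ∈ F.carrier k := by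
  show y ∈ (if j ≤ k then _ else _) ↔ _
  rw [if_pos h]
  exact Iff.rfl

lemma pullSub_carrier_neg {X Y Y' : D R} (j : ℤ) (ξ : ExtO Y Y' 0) (F : ExtSub Z X Y')
    {k : ℤ} (h : ¬ j ≤ k) : (pullSub Z j ξ F).carrier k = ⊥ := by
  show (if j ≤ k then _ else _) = ⊥
  rw [if_neg h]

/-- Truncated preimage of a graded submodule under precomposition with a class of
degree `d`, vanishing in degrees `< j`. -/
noncomputable def pullSub' {M₀ Y Y' : D R} {d : ℤ} (j : ℤ) (ξ : ExtO Y' Y d)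
    (F : ExtSub Z Y' M₀) : ExtSub Z Y M₀ where
  carrier k :=
    if j ≤ k then
      { carrier := {y | ShiftedHom.comp ξ y (rfl : k + d = k + d) ∈ F.carrier (k + d)}
        zero_mem' := by
          show ShiftedHom.comp ξ (0 : ExtO Y M₀ k) (rfl : k + d = k + d) ∈ F.carrier (k + d)
          rw [epre_zero]; exact zero_mem _
        add_mem' := by
          intro y₁ y₂ hy₁ hy₂
          show ShiftedHom.comp ξ (y₁ + y₂) (rfl : k + d = k + d) ∈ F.carrier (k + d)
          rw [epre_add]; exact add_mem hy₁ hy₂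
        neg_mem' := by
          intro y hy
          show ShiftedHom.comp ξ (-y) (rfl : k + d = k + d) ∈ F.carrier (k + d)
          rw [epre_neg]; exact neg_mem hy }
    else ⊥
  act_mem := by
    intro i k a y hy
    by_cases hjk : j ≤ k
    · rw [if_pos hjk] at hy
      by_cases hjik : j ≤ i + k
      · rw [if_pos hjik]
        have hy' : ShiftedHom.comp ξ y (rfl : k + d = k + d) ∈ F.carrier (k + d) := hy
        have hm := F.act_mem a hy'
        rw [act_precomp] at hm
        have hm2 := extCast_mem Z F (by omega : i + (k + d) = (i + k) + d) hm
        rw [cast_precomp_eq] at hm2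
        exact hm2
      · rw [if_neg hjik, act_eq_zero_of_neg Z (by omega) a y]
        exact zero_mem _
    · rw [if_neg hjk, AddSubgroup.mem_bot] at hy
      rw [hy, act_zero_right]
      exact zero_mem _

lemma mem_pullSub'_iff {M₀ Y Y' : D R} {d : ℤ} (j : ℤ) (ξ : ExtO Y' Y d)
    (F : ExtSub Z Y' M₀) {k : ℤ} (h : j ≤ k) (y : ExtO Y M₀ k) :
    y ∈ (pullSub' Z j ξ F).carrier k ↔
      ShiftedHom.comp ξ y (rfl : k + d = k + d) ∈ F.carrier (k + d) := by
  show y ∈ (if j ≤ k then _ else _) ↔ _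
  rw [if_pos h]
  exact Iff.rfl

lemma pullSub'_carrier_neg {M₀ Y Y' : D R} {d : ℤ} (j : ℤ) (ξ : ExtO Y' Y d)
    (F : ExtSub Z Y' M₀) {k : ℤ} (h : ¬ j ≤ k) : (pullSub' Z j ξ F).carrier k = ⊥ := by
  show (if j ≤ k then _ else _) = ⊥
  rw [if_neg h]

/-! Exactness of the (co)yoneda functors on distinguished triangles, in terms of
shifted hom composition. -/

lemma exact_cov {X : D R} {T : Triangle (D R)} (hT : T ∈ distTriang (D R)) {k : ℤ}
    (x : ExtO X T.obj₃ k)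
    (hx : ShiftedHom.comp x (T.mor₃ : ExtO T.obj₃ T.obj₁ 1) rfl = 0) :
    ∃ y : ExtO X T.obj₂ k,
      ShiftedHom.comp y (ShiftedHom.mk₀ (0:ℤ) rfl T.mor₂ : ExtO T.obj₂ T.obj₃ 0)
        (by omega : (0:ℤ) + k = k) = x := by
  have h1 : x ≫ T.mor₃⟦k⟧' = 0 := by
    have hx' : x ≫ T.mor₃⟦k⟧' ≫ (shiftFunctorAdd' (D R) 1 k (1 + k) rfl).inv.app T.obj₁ = 0 := hx
    rw [← Category.assoc] at hx'
    exact (cancel_mono ((shiftFunctorAdd' (D R) 1 k (1 + k) rfl).inv.app T.obj₁)).mp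
      (by rw [hx', Limits.zero_comp])
  have hT' := Pretriangulated.Triangle.shift_distinguished T hT k
  have hf : x ≫ ((shiftFunctor (Triangle (D R)) k).obj T).mor₃ = 0 := by
    simp only [Pretriangulated.Triangle.shiftFunctor_eq, Pretriangulated.Triangle.shiftFunctor_obj,
      Triangle.mk_mor₃]
    erw [Linear.comp_units_smul, ← Category.assoc, h1, Limits.zero_comp, smul_zero]
  obtain ⟨g, hg⟩ := Pretriangulated.Triangle.coyoneda_exact₃ _ hT' x hf
  have h2 : ((shiftFunctor (Triangle (D R)) k).obj T).mor₂ = k.negOnePow • T.mor₂⟦k⟧' := by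
    simp only [Pretriangulated.Triangle.shiftFunctor_eq, Pretriangulated.Triangle.shiftFunctor_obj,
      Triangle.mk_mor₂]
    rfl
  rw [h2] at hg
  refine ⟨k.negOnePow • g, ?_⟩
  have hmk : ShiftedHom.comp (k.negOnePow • g)
      (ShiftedHom.mk₀ (0:ℤ) rfl T.mor₂ : ExtO T.obj₂ T.obj₃ 0) (by omega : (0:ℤ) + k = k)
      = (k.negOnePow • g) ≫ T.mor₂⟦k⟧' :=
    ShiftedHom.comp_mk₀ (k.negOnePow • g) 0 rfl T.mor₂
  rw [hmk, hg]
  erw [Linear.units_smul_comp, Linear.comp_units_smul]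
  rfl

lemma exact_contra {M₀ : D R} {T : Triangle (D R)} (hT : T ∈ distTriang (D R)) {k : ℤ}
    (x : ExtO T.obj₃ M₀ k)
    (hx : ShiftedHom.comp (ShiftedHom.mk₀ (0:ℤ) rfl T.mor₂ : ExtO T.obj₂ T.obj₃ 0) x
      (by omega : k + (0:ℤ) = k) = 0) :
    ∃ y : ExtO T.obj₁ M₀ (k - 1),
      ShiftedHom.comp (T.mor₃ : ExtO T.obj₃ T.obj₁ 1) y (by omega : (k - 1) + 1 = k) = x := by
  have h1 : T.mor₂ ≫ x = 0 := by
    rw [← ShiftedHom.mk₀_comp (0:ℤ) rfl T.mor₂ x]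
    exact hx
  obtain ⟨g, hg⟩ := Pretriangulated.Triangle.yoneda_exact₃ _ hT x h1
  obtain ⟨y, hy⟩ := (shiftFunctor (D R) (1:ℤ)).map_surjective
    (g ≫ (shiftFunctorAdd' (D R) (k - 1) 1 k (by omega)).hom.app M₀)
  refine ⟨y, ?_⟩
  have hdef : ShiftedHom.comp (T.mor₃ : ExtO T.obj₃ T.obj₁ 1) y (by omega : (k - 1) + 1 = k)
      = T.mor₃ ≫ y⟦(1:ℤ)⟧' ≫ (shiftFunctorAdd' (D R) (k - 1) 1 k (by omega)).inv.app M₀ := rfl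
  rw [hdef, hy, hg]
  simp

/-! Two-out-of-three for eventual noetherianity in distinguished triangles. -/

lemma evNoeth_obj₃_cov {X : D R} {T : Triangle (D R)} (hT : T ∈ distTriang (D R))
    (h1 : EvNoeth Z X T.obj₁) (h2 : EvNoeth Z X T.obj₂) : EvNoeth Z X T.obj₃ := by
  obtain ⟨j₁, hj₁⟩ := h1
  obtain ⟨j₂, hj₂⟩ := h2
  refine ⟨max j₂ (j₁ - 1), fun j hj f hvan hmono => ?_⟩
  have hjj₂ : j₂ ≤ j := le_trans (le_max_left _ _) hj
  have hjj₁ : j₁ ≤ j + 1 := by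
    have := le_trans (le_max_right _ _) hj
    omega
  -- the image chain in `Ext(X, T.obj₁)` along `T.mor₃`
  let G : ℕ → ExtSub Z X T.obj₁ := fun n =>
    { carrier := fun k =>
        { carrier := {y | ∃ x : ExtO X T.obj₃ (k - 1), x ∈ (f n).carrier (k - 1) ∧
            ShiftedHom.comp x (T.mor₃ : ExtO T.obj₃ T.obj₁ 1) (by omega) = y}
          zero_mem' := ⟨0, zero_mem _, ecomp_zero _ _⟩
          add_mem' := by
            rintro y₁ y₂ ⟨x₁, hx₁, rfl⟩ ⟨x₂, hx₂, rfl⟩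
            exact ⟨x₁ + x₂, add_mem hx₁ hx₂, ecomp_add _ _ _ _⟩
          neg_mem' := by
            rintro y ⟨x, hx, rfl⟩
            exact ⟨-x, neg_mem hx, ecomp_neg _ _ _⟩ }
      act_mem := by
        rintro i k a y ⟨x, hx, rfl⟩
        refine ⟨extCast (by omega) (act Z a x), extCast_mem Z _ _ ((f n).act_mem a hx), ?_⟩
        rw [comp_cast, ← act_comp] }
  -- the truncated preimage chain in `Ext(X, T.obj₂)` along `T.mor₂`
  let H : ℕ → ExtSub Z X T.obj₂ := fun n =>
    pullSub Z j (ShiftedHom.mk₀ (0:ℤ) rfl T.mor₂ : ExtO T.obj₂ T.obj₃ 0) (f n)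
  have Gvan : ∀ (n : ℕ) (k : ℤ), k < j + 1 → (G n).carrier k = ⊥ := by
    intro n k hk
    rw [eq_bot_iff]
    rintro y ⟨x, hx, rfl⟩
    rw [hvan n (k - 1) (by omega), AddSubgroup.mem_bot] at hx
    rw [hx, AddSubgroup.mem_bot]
    exact ecomp_zero _ _
  have Gmono : ∀ (n : ℕ) (k : ℤ), (G n).carrier k ≤ (G (n + 1)).carrier k := by
    rintro n k y ⟨x, hx, rfl⟩
    exact ⟨x, hmono n (k - 1) hx, rfl⟩
  have Hvan : ∀ (n : ℕ) (k : ℤ), k < j → (H n).carrier k = ⊥ := fun n k hk =>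
    pullSub_carrier_neg Z j _ (f n) (by omega)
  have Hmono : ∀ (n : ℕ) (k : ℤ), (H n).carrier k ≤ (H (n + 1)).carrier k := by
    intro n k y hy
    by_cases hjk : j ≤ k
    · rw [mem_pullSub_iff Z j _ (f n) hjk] at hy
      exact (mem_pullSub_iff Z j _ (f (n + 1)) hjk y).mpr (hmono n k hy)
    · rw [pullSub_carrier_neg Z j _ (f n) hjk, AddSubgroup.mem_bot] at hy
      rw [hy]
      exact zero_mem _
  obtain ⟨N₁, hN₁⟩ := hj₁ (j + 1) (by omega) G Gvan Gmono
  obtain ⟨N₂, hN₂⟩ := hj₂ j hjj₂ H Hvan Hmono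
  refine ⟨max N₁ N₂, fun m hm k => ?_⟩
  have hN₁m : N₁ ≤ m := le_trans (le_max_left _ _) hm
  have hN₂m : N₂ ≤ m := le_trans (le_max_right _ _) hm
  refine le_antisymm (fun x hx => ?_) (carrier_le Z f hmono hm k)
  by_cases hk : k < j
  · rw [hvan m k hk, AddSubgroup.mem_bot] at hx
    rw [hx]
    exact zero_mem _
  push_neg at hk
  -- push `x` into the image chain and use its stabilization
  have hδG : ShiftedHom.comp x (T.mor₃ : ExtO T.obj₃ T.obj₁ 1) rfl ∈ (G m).carrier (1 + k) :=
    ⟨extCast (by omega) x, extCast_mem Z _ _ hx, comp_cast _ _ _ _⟩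
  rw [hN₁ m hN₁m (1 + k)] at hδG
  obtain ⟨x', hx', heq⟩ := hδG
  have hx''N : extCast (by omega : 1 + k - 1 = k) x' ∈ (f (max N₁ N₂)).carrier k :=
    carrier_le Z f hmono (le_max_left _ _) k (extCast_mem Z _ _ hx')
  have hx''m : extCast (by omega : 1 + k - 1 = k) x' ∈ (f m).carrier k :=
    carrier_le Z f hmono hm k hx''N
  have hδ0 : ShiftedHom.comp (x - extCast (by omega : 1 + k - 1 = k) x')
      (T.mor₃ : ExtO T.obj₃ T.obj₁ 1) rfl = 0 := by
    rw [ecomp_sub, comp_cast, heq, sub_self]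
  obtain ⟨y, hy⟩ := exact_cov hT _ hδ0
  -- `y` lies in the preimage chain, which is stable
  have hyH : y ∈ (H m).carrier k :=
    (mem_pullSub_iff Z j _ (f m) hk y).mpr (by rw [hy]; exact sub_mem hx hx''m)
  have hyH' : y ∈ (H (max N₁ N₂)).carrier k := by
    rw [hN₂ m hN₂m k] at hyH
    rw [hN₂ (max N₁ N₂) (le_max_right _ _) k]
    exact hyH
  have hyf : ShiftedHom.comp y (ShiftedHom.mk₀ (0:ℤ) rfl T.mor₂ : ExtO T.obj₂ T.obj₃ 0)
      (by omega : (0:ℤ) + k = k) ∈ (f (max N₁ N₂)).carrier k :=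
    (mem_pullSub_iff Z j _ (f (max N₁ N₂)) hk y).mp hyH'
  rw [hy] at hyf
  have hfin := add_mem hx''N hyf
  have hre : extCast (by omega : 1 + k - 1 = k) x'
      + (x - extCast (by omega : 1 + k - 1 = k) x') = x := by abel
  rw [hre] at hfin
  exact hfin

lemma evNoeth_obj₃_contra {M₀ : D R} {T : Triangle (D R)} (hT : T ∈ distTriang (D R))
    (h1 : EvNoeth Z T.obj₁ M₀) (h2 : EvNoeth Z T.obj₂ M₀) : EvNoeth Z T.obj₃ M₀ := by
  obtain ⟨j₁, hj₁⟩ := h1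
  obtain ⟨j₂, hj₂⟩ := h2
  refine ⟨max j₂ (j₁ + 1), fun j hj f hvan hmono => ?_⟩
  have hjj₂ : j₂ ≤ j := le_trans (le_max_left _ _) hj
  have hjj₁ : j₁ ≤ j - 1 := by
    have := le_trans (le_max_right _ _) hj
    omega
  -- the image chain in `Ext(T.obj₂, M₀)` along precomposition with `T.mor₂`
  let G : ℕ → ExtSub Z T.obj₂ M₀ := fun n =>
    { carrier := fun k =>
        { carrier := {y | ∃ x : ExtO T.obj₃ M₀ k, x ∈ (f n).carrier k ∧
            ShiftedHom.comp (ShiftedHom.mk₀ (0:ℤ) rfl T.mor₂ : ExtO T.obj₂ T.obj₃ 0) x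
              (by omega : k + (0:ℤ) = k) = y}
          zero_mem' := ⟨0, zero_mem _, epre_zero _ _⟩
          add_mem' := by
            rintro y₁ y₂ ⟨x₁, hx₁, rfl⟩ ⟨x₂, hx₂, rfl⟩
            exact ⟨x₁ + x₂, add_mem hx₁ hx₂, epre_add _ _ _ _⟩
          neg_mem' := by
            rintro y ⟨x, hx, rfl⟩
            exact ⟨-x, neg_mem hx, epre_neg _ _ _⟩ }
      act_mem := by
        rintro i k a y ⟨x, hx, rfl⟩
        refine ⟨act Z a x, (f n).act_mem a hx, ?_⟩
        rw [← act_precomp] }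
  -- the truncated preimage chain in `Ext(T.obj₁, M₀)` along precomposition with `T.mor₃`
  let H : ℕ → ExtSub Z T.obj₁ M₀ := fun n =>
    pullSub' Z (j - 1) (T.mor₃ : ExtO T.obj₃ T.obj₁ 1) (f n)
  have Gvan : ∀ (n : ℕ) (k : ℤ), k < j → (G n).carrier k = ⊥ := by
    intro n k hk
    rw [eq_bot_iff]
    rintro y ⟨x, hx, rfl⟩
    rw [hvan n k hk, AddSubgroup.mem_bot] at hx
    rw [hx, AddSubgroup.mem_bot]
    exact epre_zero _ _
  have Gmono : ∀ (n : ℕ) (k : ℤ), (G n).carrier k ≤ (G (n + 1)).carrier k := by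
    rintro n k y ⟨x, hx, rfl⟩
    exact ⟨x, hmono n k hx, rfl⟩
  have Hvan : ∀ (n : ℕ) (k : ℤ), k < j - 1 → (H n).carrier k = ⊥ := fun n k hk =>
    pullSub'_carrier_neg Z (j - 1) _ (f n) (by omega)
  have Hmono : ∀ (n : ℕ) (k : ℤ), (H n).carrier k ≤ (H (n + 1)).carrier k := by
    intro n k y hy
    by_cases hjk : j - 1 ≤ k
    · rw [mem_pullSub'_iff Z (j - 1) _ (f n) hjk] at hy
      exact (mem_pullSub'_iff Z (j - 1) _ (f (n + 1)) hjk y).mpr (hmono n (k + 1) hy)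
    · rw [pullSub'_carrier_neg Z (j - 1) _ (f n) hjk, AddSubgroup.mem_bot] at hy
      rw [hy]
      exact zero_mem _
  obtain ⟨N₂, hN₂⟩ := hj₂ j hjj₂ G Gvan Gmono
  obtain ⟨N₁, hN₁⟩ := hj₁ (j - 1) (by omega) H Hvan Hmono
  refine ⟨max N₁ N₂, fun m hm k => ?_⟩
  have hN₁m : N₁ ≤ m := le_trans (le_max_left _ _) hm
  have hN₂m : N₂ ≤ m := le_trans (le_max_right _ _) hm
  refine le_antisymm (fun x hx => ?_) (carrier_le Z f hmono hm k)
  by_cases hk : k < j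
  · rw [hvan m k hk, AddSubgroup.mem_bot] at hx
    rw [hx]
    exact zero_mem _
  push_neg at hk
  -- push `x` into the image chain and use its stabilization
  have hπG : ShiftedHom.comp (ShiftedHom.mk₀ (0:ℤ) rfl T.mor₂ : ExtO T.obj₂ T.obj₃ 0) x
      (by omega : k + (0:ℤ) = k) ∈ (G m).carrier k := ⟨x, hx, rfl⟩
  rw [hN₂ m hN₂m k] at hπG
  obtain ⟨x', hx', heq⟩ := hπG
  have hx'N : x' ∈ (f (max N₁ N₂)).carrier k :=
    carrier_le Z f hmono (le_max_right _ _) k hx'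
  have hx'm : x' ∈ (f m).carrier k := carrier_le Z f hmono hm k hx'N
  have hπ0 : ShiftedHom.comp (ShiftedHom.mk₀ (0:ℤ) rfl T.mor₂ : ExtO T.obj₂ T.obj₃ 0)
      (x - x') (by omega : k + (0:ℤ) = k) = 0 := by
    rw [epre_sub, heq, sub_self]
  obtain ⟨y, hy⟩ := exact_contra hT _ hπ0
  -- `y` lies in the preimage chain, which is stable
  have hyH : y ∈ (H m).carrier (k - 1) := by
    refine (mem_pullSub'_iff Z (j - 1) _ (f m) (by omega : j - 1 ≤ k - 1) y).mpr ?_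
    have hcast : ShiftedHom.comp (T.mor₃ : ExtO T.obj₃ T.obj₁ 1) y
        (rfl : (k - 1) + 1 = (k - 1) + 1) = extCast (by omega : k = (k - 1) + 1) (x - x') := by
      rw [← hy, cast_precomp_eq]
    rw [hcast]
    exact extCast_mem Z _ _ (sub_mem hx hx'm)
  have hyH' : y ∈ (H (max N₁ N₂)).carrier (k - 1) := by
    rw [hN₁ m hN₁m (k - 1)] at hyH
    rw [hN₁ (max N₁ N₂) (le_max_left _ _) (k - 1)]
    exact hyH
  have hyf : ShiftedHom.comp (T.mor₃ : ExtO T.obj₃ T.obj₁ 1) y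
      (rfl : (k - 1) + 1 = (k - 1) + 1) ∈ (f (max N₁ N₂)).carrier ((k - 1) + 1) :=
    (mem_pullSub'_iff Z (j - 1) _ (f (max N₁ N₂)) (by omega : j - 1 ≤ k - 1) y).mp hyH'
  have hsub : x - x' ∈ (f (max N₁ N₂)).carrier k := by
    have hc : extCast (by omega : (k - 1) + 1 = k)
        (ShiftedHom.comp (T.mor₃ : ExtO T.obj₃ T.obj₁ 1) y (rfl : (k - 1) + 1 = (k - 1) + 1))
        = x - x' := by
      rw [cast_precomp_eq]
      exact hy
    rw [← hc]
    exact extCast_mem Z _ _ hyf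
  have hfin := add_mem hx'N hsub
  have hre : x' + (x - x') = x := by abel
  rw [hre] at hfin
  exact hfin

end Auxiliary

end CohSupp

namespace CohSupp

/-- Let `A` be a ring of central cohomology operations on `D(R)` and
`M` a complex of `R`-modules.  The full subcategory of `D(R)` of objects `L` with
`Ext*_R(M,L)` eventually noetherian over `A` is thick, and likewise for the objects `L`
with `Ext*_R(L,M)` eventually noetherian. -/
theorem statement_9 {R : Type u} [Ring R] [HasDerivedCategory.{w} (ModuleCat.{u} R)]
    {A : Type v} [CommRing A] {ℬ : ℤ → AddSubgroup A} [GradedRing ℬ]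
    (Z : CentralOps R A ℬ) (M : Cx R) :
    IsThickSet {L : D R | EvNoeth Z (dQ.obj M) L} ∧
    IsThickSet {L : D R | EvNoeth Z L (dQ.obj M)} := by
  constructor
  · refine ⟨?_, ?_, ?_, ?_, ?_⟩
    · -- zero objects
      intro L hL
      refine evNoeth_of_subsingleton Z fun j => ⟨fun a b => ?_⟩
      exact ((shiftFunctor (D R) j).map_isZero hL).eq_of_tgt a b
    · -- isomorphisms
      intro L L' e hL
      refine evNoeth_of_comp_inj Z (ShiftedHom.mk₀ (0:ℤ) rfl e.inv : ExtO L' L 0) ?_ hL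
      intro j c h x hx
      have hc : j = c := by omega
      subst hc
      rw [ShiftedHom.comp_mk₀] at hx
      have h2 : x ≫ e.inv⟦j⟧' ≫ e.hom⟦j⟧' = 0 := by
        rw [← Category.assoc, hx, Limits.zero_comp]
      rwa [← CategoryTheory.Functor.map_comp, e.inv_hom_id, CategoryTheory.Functor.map_id, Category.comp_id] at h2
    · -- shifts
      intro L hL
      constructor
      · refine evNoeth_of_comp_inj Z ((𝟙 (L⟦(1:ℤ)⟧)) : ExtO (L⟦(1:ℤ)⟧) L 1) ?_ hL
        intro j c h x hx
        have hx' : x ≫ (𝟙 (L⟦(1:ℤ)⟧))⟦j⟧' ≫ (shiftFunctorAdd' (D R) 1 j c h).inv.app L = 0 := hx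
        rw [CategoryTheory.Functor.map_id, Category.id_comp] at hx'
        exact (cancel_mono ((shiftFunctorAdd' (D R) 1 j c h).inv.app L)).mp
          (by rw [hx', Limits.zero_comp])
      · refine evNoeth_of_comp_inj Z ((𝟙 (L⟦(-1:ℤ)⟧)) : ExtO (L⟦(-1:ℤ)⟧) L (-1)) ?_ hL
        intro j c h x hx
        have hx' : x ≫ (𝟙 (L⟦(-1:ℤ)⟧))⟦j⟧' ≫ (shiftFunctorAdd' (D R) (-1) j c h).inv.app L = 0 :=
          hx
        rw [CategoryTheory.Functor.map_id, Category.id_comp] at hx'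
        exact (cancel_mono ((shiftFunctorAdd' (D R) (-1) j c h).inv.app L)).mp
          (by rw [hx', Limits.zero_comp])
    · -- distinguished triangles
      intro T hT h1 h2
      exact evNoeth_obj₃_cov Z hT h1 h2
    · -- retracts
      intro L L' ι ρ hιρ hL'
      refine evNoeth_of_comp_inj Z (ShiftedHom.mk₀ (0:ℤ) rfl ι : ExtO L L' 0) ?_ hL'
      intro j c h x hx
      have hc : j = c := by omega
      subst hc
      rw [ShiftedHom.comp_mk₀] at hx
      have h2 : x ≫ (ι ≫ ρ)⟦j⟧' = 0 := by
        rw [CategoryTheory.Functor.map_comp, ← Category.assoc, hx, Limits.zero_comp]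
      rwa [hιρ, CategoryTheory.Functor.map_id, Category.comp_id] at h2
  · refine ⟨?_, ?_, ?_, ?_, ?_⟩
    · -- zero objects
      intro L hL
      exact evNoeth_of_subsingleton Z fun j => ⟨fun a b => hL.eq_of_src a b⟩
    · -- isomorphisms
      intro L L' e hL
      refine evNoeth_of_precomp_inj Z (ShiftedHom.mk₀ (0:ℤ) rfl e.hom : ExtO L L' 0) ?_ hL
      intro j c h x hx
      have hc : j = c := by omega
      subst hc
      rw [ShiftedHom.mk₀_comp] at hx
      exact (cancel_epi e.hom).mp (by rw [hx, Limits.comp_zero])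
    · -- shifts
      intro L hL
      constructor
      · refine evNoeth_of_precomp_inj Z
          ((shiftFunctorCompIsoId (D R) (1:ℤ) (-1:ℤ) (by omega)).inv.app L :
            ExtO L (L⟦(1:ℤ)⟧) (-1)) ?_ hL
        intro j c h x hx
        have h0 : (shiftFunctorCompIsoId (D R) (1:ℤ) (-1:ℤ) (by omega)).inv.app L ≫
            (x⟦(-1:ℤ)⟧' ≫ (shiftFunctorAdd' (D R) j (-1) c h).inv.app (dQ.obj M)) = 0 := hx
        have h1 : x⟦(-1:ℤ)⟧' ≫ (shiftFunctorAdd' (D R) j (-1) c h).inv.app (dQ.obj M) = 0 :=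
          (cancel_epi ((shiftFunctorCompIsoId (D R) (1:ℤ) (-1:ℤ) (by omega)).inv.app L)).mp
            (by rw [h0, Limits.comp_zero])
        have h2 : x⟦(-1:ℤ)⟧' = 0 :=
          (cancel_mono ((shiftFunctorAdd' (D R) j (-1) c h).inv.app (dQ.obj M))).mp
            (by rw [h1, Limits.zero_comp])
        have h3 : x⟦(-1:ℤ)⟧' = (0 : ExtO (L⟦(1:ℤ)⟧) (dQ.obj M) j)⟦(-1:ℤ)⟧' := by
          rw [h2, CategoryTheory.Functor.map_zero]
        exact (shiftFunctor (D R) (-1:ℤ)).map_injective h3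
      · refine evNoeth_of_precomp_inj Z
          ((shiftFunctorCompIsoId (D R) (-1:ℤ) (1:ℤ) (by omega)).inv.app L :
            ExtO L (L⟦(-1:ℤ)⟧) 1) ?_ hL
        intro j c h x hx
        have h0 : (shiftFunctorCompIsoId (D R) (-1:ℤ) (1:ℤ) (by omega)).inv.app L ≫
            (x⟦(1:ℤ)⟧' ≫ (shiftFunctorAdd' (D R) j 1 c h).inv.app (dQ.obj M)) = 0 := hx
        have h1 : x⟦(1:ℤ)⟧' ≫ (shiftFunctorAdd' (D R) j 1 c h).inv.app (dQ.obj M) = 0 :=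
          (cancel_epi ((shiftFunctorCompIsoId (D R) (-1:ℤ) (1:ℤ) (by omega)).inv.app L)).mp
            (by rw [h0, Limits.comp_zero])
        have h2 : x⟦(1:ℤ)⟧' = 0 :=
          (cancel_mono ((shiftFunctorAdd' (D R) j 1 c h).inv.app (dQ.obj M))).mp
            (by rw [h1, Limits.zero_comp])
        have h3 : x⟦(1:ℤ)⟧' = (0 : ExtO (L⟦(-1:ℤ)⟧) (dQ.obj M) j)⟦(1:ℤ)⟧' := by
          rw [h2, CategoryTheory.Functor.map_zero]
        exact (shiftFunctor (D R) (1:ℤ)).map_injective h3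
    · -- distinguished triangles
      intro T hT h1 h2
      exact evNoeth_obj₃_contra Z hT h1 h2
    · -- retracts
      intro L L' ι ρ hιρ hL'
      refine evNoeth_of_precomp_inj Z (ShiftedHom.mk₀ (0:ℤ) rfl ρ : ExtO L' L 0) ?_ hL'
      intro j c h x hx
      have hc : j = c := by omega
      subst hc
      rw [ShiftedHom.mk₀_comp] at hx
      have h2 : ι ≫ ρ ≫ x = 0 := by rw [hx, Limits.comp_zero]
      rwa [← Category.assoc, hιρ, Category.id_comp] at h2

end CohSupp
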